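/- Fix positive integers $k, l$, natural numbers $n_1,\ldots,n_k$ and $e_1,\ldots,e_l$ with $e_1 + \cdots + e_l = n_1 + \cdots + n_k$, and let $A$ denote the matrix count defined below. Suppose $s$ is such that $2^s > n_1 + \cdots + n_k$, and let $r_1, \ldots, r_l$ be positive multiples of $2^s$, with $n_{k+1} = r_1 + \cdots + r_l$. Then $A(n_1,\ldots,n_k,n_{k+1};\ e_1+r_1,\ldots,e_l+r_l) = A(n_1,\ldots,n_k;\ e_1,\ldots,e_l)$. -/

import Mathlib

theorem myAdd_eq_or : ∀ a b : ℕ, a &&& b = 0 → a + b = a ||| b := by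
  intro a
  induction a using Nat.strong_induction_on with
  | _ a ih =>
    intro b h
    rcases Nat.eq_zero_or_pos a with rfl | ha
    · simp
    · have h2 : a / 2 &&& b / 2 = 0 := by rw [← Nat.and_div_two, h]
      have ihb := ih (a / 2) (Nat.div_lt_self ha (by norm_num)) (b / 2) h2
      have hm : ¬(a % 2 = 1 ∧ b % 2 = 1) := by
        rw [← Nat.and_mod_two_eq_one, h]
        norm_num
      have hor := Nat.or_mod_two_eq_one (a := a) (b := b)
      have hdiv := Nat.or_div_two (a := a) (b := b)
      omega

theorem mySum_disjoint {ι : Type*} (s : ℕ) (T : Finset ι) (f : ι → ℕ)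
    (hlt : ∀ i ∈ T, f i < 2 ^ s)
    (hdisj : ∀ i ∈ T, ∀ i' ∈ T, i ≠ i' → f i &&& f i' = 0) :
    (∀ a, (∀ i ∈ T, a &&& f i = 0) → a &&& (∑ i ∈ T, f i) = 0) ∧ (∑ i ∈ T, f i) < 2 ^ s := by
  classical
  induction T using Finset.induction_on with
  | empty => simp [Nat.pow_pos]
  | @insert x T hx ihT =>
    obtain ⟨IH1, IH2⟩ := ihT (fun i hi => hlt i (Finset.mem_insert_of_mem hi))
      (fun i hi i' hi' hne => hdisj i (Finset.mem_insert_of_mem hi) i'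
        (Finset.mem_insert_of_mem hi') hne)
    have hfx : f x &&& (∑ i ∈ T, f i) = 0 := IH1 (f x) (fun i hi =>
      hdisj x (Finset.mem_insert_self x T) i (Finset.mem_insert_of_mem hi)
        (fun hxi => hx (hxi ▸ hi)))
    rw [Finset.sum_insert hx, myAdd_eq_or _ _ hfx]
    constructor
    · intro a ha
      rw [Nat.and_or_distrib_left, ha x (Finset.mem_insert_self x T),
        IH1 a (fun i hi => ha i (Finset.mem_insert_of_mem hi))]
      simp
    · exact Nat.or_lt_two_pow (hlt x (Finset.mem_insert_self x T)) IH2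

theorem myDvd_and_small {s a b : ℕ} (ha : 2 ^ s ∣ a) (hb : b < 2 ^ s) : a &&& b = 0 := by
  obtain ⟨c, rfl⟩ := ha
  have h1 : b &&& (2 ^ s - 1) = b := Nat.and_two_pow_sub_one_of_lt_two_pow hb
  have h2 : (2 ^ s * c) &&& (2 ^ s - 1) = 0 := by
    rw [Nat.and_two_pow_sub_one_eq_mod, Nat.mul_mod_right]
  calc (2 ^ s * c) &&& b = ((2 ^ s * c) &&& (2 ^ s - 1)) &&& b := by
        conv_lhs => rw [← h1]
        rw [Nat.land_assoc, Nat.land_comm b, ← Nat.land_assoc, Nat.land_assoc]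
    _ = 0 := by rw [h2]; simp



/-- Adding a new row with large entries: if `2^s > ∑ n i`, the `r j` are positive
multiples of `2^s`, and `∑ e j = ∑ n i`, then the count of matrices with the extra
row sum `∑ r j` and column sums `e j + r j` equals the original count. -/
theorem matrix_count_extend (k l : ℕ) (hk : 0 < k) (hl : 0 < l)
    (n : Fin k → ℕ) (e : Fin l → ℕ) (s : ℕ) (r : Fin l → ℕ)
    (hsum : ∑ j, e j = ∑ i, n i)
    (hs : ∑ i, n i < 2 ^ s)
    (hr : ∀ j, 0 < r j ∧ 2 ^ s ∣ r j) :
    Set.ncard {M : Fin (k + 1) → Fin l → ℕ |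
        (∀ i j, 0 < M i j) ∧
        (∀ i, ∑ j, M i j = (Fin.snoc n (∑ j, r j) : Fin (k + 1) → ℕ) i) ∧
        (∀ j, ∑ i, M i j = e j + r j) ∧
        (∀ j, ∀ i i' : Fin (k + 1), i ≠ i' → M i j &&& M i' j = 0)}
      = Set.ncard {M : Fin k → Fin l → ℕ |
          (∀ i j, 0 < M i j) ∧ (∀ i, ∑ j, M i j = n i) ∧
          (∀ j, ∑ i, M i j = e j) ∧
          (∀ j, ∀ i i' : Fin k, i ≠ i' → M i j &&& M i' j = 0)} := by
  classical
  set S1 := {M : Fin (k + 1) → Fin l → ℕ |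
        (∀ i j, 0 < M i j) ∧
        (∀ i, ∑ j, M i j = (Fin.snoc n (∑ j, r j) : Fin (k + 1) → ℕ) i) ∧
        (∀ j, ∑ i, M i j = e j + r j) ∧
        (∀ j, ∀ i i' : Fin (k + 1), i ≠ i' → M i j &&& M i' j = 0)} with hS1
  set S2 := {M : Fin k → Fin l → ℕ |
          (∀ i j, 0 < M i j) ∧ (∀ i, ∑ j, M i j = n i) ∧
          (∀ j, ∑ i, M i j = e j) ∧
          (∀ j, ∀ i i' : Fin k, i ≠ i' → M i j &&& M i' j = 0)} with hS2
  have hpow : 0 < 2 ^ s := Nat.pow_pos (by norm_num)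
  have he : ∀ j, e j < 2 ^ s := fun j =>
    lt_of_le_of_lt (hsum ▸ Finset.single_le_sum (fun _ _ => Nat.zero_le _)
      (Finset.mem_univ j)) hs
  set F : (Fin (k + 1) → Fin l → ℕ) → (Fin k → Fin l → ℕ) :=
    fun M i j => M i.castSucc j with hF
  -- Key: for M ∈ S1, the last row is forced to be r, and partial column sums are e
  have key : ∀ M ∈ S1, (∀ j, M (Fin.last k) j = r j) ∧
      (∀ j, ∑ i : Fin k, M i.castSucc j = e j) := by
    rintro M ⟨hpos, hrow, hcol, hdis⟩
    have hlt : ∀ (i : Fin k) (j : Fin l), M i.castSucc j < 2 ^ s := by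
      intro i j
      have h1 : M i.castSucc j ≤ n i := by
        have h2 := hrow i.castSucc
        rw [Fin.snoc_castSucc] at h2
        exact h2 ▸ Finset.single_le_sum (fun _ _ => Nat.zero_le _) (Finset.mem_univ j)
      exact lt_of_le_of_lt (h1.trans (Finset.single_le_sum
        (fun _ _ => Nat.zero_le _) (Finset.mem_univ i))) hs
    have hSD : ∀ j : Fin l,
        (∀ a, (∀ i : Fin k, a &&& M i.castSucc j = 0) →
          a &&& (∑ i : Fin k, M i.castSucc j) = 0) ∧
        (∑ i : Fin k, M i.castSucc j) < 2 ^ s := by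
      intro j
      have h3 := mySum_disjoint s Finset.univ (fun i : Fin k => M i.castSucc j)
        (fun i _ => hlt i j)
        (fun i _ i' _ hne => hdis j _ _ (fun hc => hne (Fin.castSucc_injective k hc)))
      exact ⟨fun a ha => h3.1 a (fun i _ => ha i), h3.2⟩
    set t : Fin l → ℕ := fun j => M (Fin.last k) j % 2 ^ s with ht
    have htdisj : ∀ (j : Fin l) (i : Fin k), t j &&& M i.castSucc j = 0 := by
      intro j i
      have hd : M (Fin.last k) j &&& M i.castSucc j = 0 :=
        hdis j _ _ (Fin.castSucc_lt_last i).ne'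
      have h4 : t j = M (Fin.last k) j &&& (2 ^ s - 1) := by
        rw [Nat.and_two_pow_sub_one_eq_mod]
      rw [h4, Nat.land_comm _ (2 ^ s - 1), Nat.land_assoc, hd]
      simp
    have htS : ∀ j, t j + (∑ i : Fin k, M i.castSucc j) < 2 ^ s := by
      intro j
      have h0 : t j &&& (∑ i : Fin k, M i.castSucc j) = 0 :=
        (hSD j).1 (t j) (htdisj j)
      rw [myAdd_eq_or _ _ h0]
      exact Nat.or_lt_two_pow (Nat.mod_lt _ hpow) (hSD j).2
    have hcol' : ∀ j, (∑ i : Fin k, M i.castSucc j) + M (Fin.last k) j = e j + r j := by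
      intro j
      have h5 := hcol j
      rwa [Fin.sum_univ_castSucc] at h5
    have hte : ∀ j, t j + (∑ i : Fin k, M i.castSucc j) = e j := by
      intro j
      obtain ⟨c, hc⟩ := (hr j).2
      have hdm : 2 ^ s * (M (Fin.last k) j / 2 ^ s) + t j = M (Fin.last k) j :=
        Nat.div_add_mod _ _
      have heq : t j + (∑ i : Fin k, M i.castSucc j)
          + 2 ^ s * (M (Fin.last k) j / 2 ^ s) = e j + 2 ^ s * c := by
        rw [← hc]
        linarith [hcol' j]
      have h1 : (t j + (∑ i : Fin k, M i.castSucc j)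
          + 2 ^ s * (M (Fin.last k) j / 2 ^ s)) % 2 ^ s = (e j + 2 ^ s * c) % 2 ^ s := by
        rw [heq]
      rwa [Nat.add_mul_mod_self_left, Nat.add_mul_mod_self_left,
        Nat.mod_eq_of_lt (htS j), Nat.mod_eq_of_lt (he j)] at h1
    have hsum_t : ∀ j, t j = 0 := by
      have hS_sum : ∑ j, (∑ i : Fin k, M i.castSucc j) = ∑ i, n i := by
        rw [Finset.sum_comm]
        exact Finset.sum_congr rfl (fun i _ => by
          have h2 := hrow i.castSucc
          rwa [Fin.snoc_castSucc] at h2)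
      have h6 : ∑ j, (t j + (∑ i : Fin k, M i.castSucc j)) = ∑ j, e j :=
        Finset.sum_congr rfl (fun j _ => hte j)
      rw [Finset.sum_add_distrib, hS_sum, hsum] at h6
      have h7 : ∑ j, t j = 0 := by omega
      exact fun j => Finset.sum_eq_zero_iff.mp h7 j (Finset.mem_univ j)
    have hSe : ∀ j, ∑ i : Fin k, M i.castSucc j = e j := by
      intro j
      have := hte j
      rw [hsum_t j] at this
      omega
    refine ⟨fun j => ?_, hSe⟩
    have h8 := hcol' j
    rw [hSe j] at h8
    omega
  -- the image of S1 under F is S2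
  have himg : F '' S1 = S2 := by
    apply Set.Subset.antisymm
    · rintro _ ⟨M, hM, rfl⟩
      obtain ⟨hpos, hrow, hcol, hdis⟩ := hM
      refine ⟨fun i j => hpos _ _, fun i => ?_, (key M ⟨hpos, hrow, hcol, hdis⟩).2,
        fun j i i' hne => hdis j _ _ (fun hc => hne (Fin.castSucc_injective k hc))⟩
      have h2 := hrow i.castSucc
      rwa [Fin.snoc_castSucc] at h2
    · rintro N ⟨hpos, hrow, hcol, hdis⟩
      have hNlt : ∀ (i : Fin k) (j : Fin l), N i j < 2 ^ s := by
        intro i j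
        have h1 : N i j ≤ n i :=
          hrow i ▸ Finset.single_le_sum (fun _ _ => Nat.zero_le _) (Finset.mem_univ j)
        exact lt_of_le_of_lt (h1.trans (Finset.single_le_sum
          (fun _ _ => Nat.zero_le _) (Finset.mem_univ i))) hs
      refine ⟨Fin.snoc N r, ⟨?_, ?_, ?_, ?_⟩, ?_⟩
      · intro i j
        induction i using Fin.lastCases with
        | last => rw [Fin.snoc_last]; exact (hr j).1
        | cast i => rw [Fin.snoc_castSucc]; exact hpos i j
      · intro i
        induction i using Fin.lastCases with
        | last => simp [Fin.snoc_last]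
        | cast i => simp [Fin.snoc_castSucc, hrow i]
      · intro j
        rw [Fin.sum_univ_castSucc]
        simp only [Fin.snoc_castSucc, Fin.snoc_last]
        rw [hcol j]
      · intro j i i' hne
        induction i using Fin.lastCases with
        | last =>
          induction i' using Fin.lastCases with
          | last => exact absurd rfl hne
          | cast i' =>
            simp only [Fin.snoc_last, Fin.snoc_castSucc]
            exact myDvd_and_small (hr j).2 (hNlt i' j)
        | cast i =>
          induction i' using Fin.lastCases with
          | last =>
            simp only [Fin.snoc_last, Fin.snoc_castSucc]
            rw [Nat.land_comm]
            exact myDvd_and_small (hr j).2 (hNlt i j)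
          | cast i' =>
            simp only [Fin.snoc_castSucc]
            exact hdis j i i' (fun hc => hne (by rw [hc]))
      · funext i j
        simp [hF, Fin.snoc_castSucc]
  -- F is injective on S1
  have hinj : Set.InjOn F S1 := by
    intro M hM M' hM' hFM
    funext i j
    induction i using Fin.lastCases with
    | last => rw [(key M hM).1 j, (key M' hM').1 j]
    | cast i => exact congrFun (congrFun hFM i) j
  rw [← himg, Set.ncard_image_of_injOn hinj]
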